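/- (Functoriality of coefficient ideals under smooth extension by variables.) Let k be a field of characteristic zero, R = k[x_1,…,x_n], S = k[x_1,…,x_n, y_1,…,y_m], I ⊆ R an ideal, and a ≥ 1 an integer. Then the coefficient ideal computed in S of the extended ideal equals the extension of the coefficient ideal: C(I·S, a) = C(I, a)·S. -/

import Mathlib

open MvPolynomial

/-- The derivative ideal: the ideal generated by `I` together with all first partial
derivatives of its elements (with respect to all variables). -/
noncomputable def derivIdeal {k : Type*} [CommSemiring k] {σ : Type*}
    (I : Ideal (MvPolynomial σ k)) : Ideal (MvPolynomial σ k) :=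
  I ⊔ Ideal.span {g | ∃ f ∈ I, ∃ i : σ, g = pderiv i f}

/-- The coefficient ideal `C(I,a) = Σ D^{a-1}(I)^{b₁} ⋯ D⁰(I)^{b_a}`, the sum running over
all tuples `(b₁,…,b_a)` of nonnegative integers with `Σ i·b_i ≥ a!`. -/
noncomputable def coeffIdeal {k : Type*} [CommSemiring k] {σ : Type*}
    (I : Ideal (MvPolynomial σ k)) (a : ℕ) : Ideal (MvPolynomial σ k) :=
  ⨆ b : {b : Fin a → ℕ // Nat.factorial a ≤ ∑ i, (i.1 + 1) * b i},
    ∏ i : Fin a, (derivIdeal^[a - (i.1 + 1)] I) ^ (b.1 i)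

lemma le_derivIdeal {k : Type*} [CommSemiring k] {σ : Type*}
    (I : Ideal (MvPolynomial σ k)) : I ≤ derivIdeal I := le_sup_left

lemma pderiv_mem_derivIdeal {k : Type*} [CommSemiring k] {σ : Type*}
    {I : Ideal (MvPolynomial σ k)} {f : MvPolynomial σ k} (hf : f ∈ I) (i : σ) :
    pderiv i f ∈ derivIdeal I :=
  Submodule.mem_sup_right (Ideal.subset_span ⟨f, hf, i, rfl⟩)

section

variable {k : Type*} [CommSemiring k] {n m : ℕ}

local notation "φ" => (rename (Sum.inl : Fin n → Fin n ⊕ Fin m) :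
    MvPolynomial (Fin n) k →ₐ[k] MvPolynomial (Fin n ⊕ Fin m) k)

lemma pderiv_mem_map_derivIdeal (I : Ideal (MvPolynomial (Fin n) k))
    {f : MvPolynomial (Fin n ⊕ Fin m) k} (hf : f ∈ Ideal.map φ I)
    (j : Fin n ⊕ Fin m) : pderiv j f ∈ Ideal.map φ (derivIdeal I) := by
  have hIle : Ideal.map φ I ≤ Ideal.map φ (derivIdeal I) :=
    Ideal.map_mono (le_derivIdeal I)
  rw [Ideal.map] at hf
  refine Submodule.span_induction ?_ ?_ ?_ ?_ hf
  · rintro x ⟨g, hg, rfl⟩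
    cases j with
    | inl i =>
      rw [pderiv_rename Sum.inl_injective]
      exact Ideal.mem_map_of_mem _ (pderiv_mem_derivIdeal hg i)
    | inr j =>
      rw [pderiv_eq_zero_of_notMem_vars]
      · exact Submodule.zero_mem _
      · intro hmem
        obtain ⟨i, _, h⟩ := mem_vars_rename _ _ hmem
        exact Sum.inl_ne_inr h
  · simp
  · intro x y _ _ hx hy
    rw [map_add]; exact Ideal.add_mem _ hx hy
  · intro c x hxspan hx
    have hx' : x ∈ Ideal.map φ I := by rwa [Ideal.map]
    have : pderiv j (c * x) = pderiv j c * x + c * pderiv j x := pderiv_mul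
    rw [smul_eq_mul, this]
    exact Ideal.add_mem _ (Ideal.mul_mem_left _ _ (hIle hx'))
      (Ideal.mul_mem_left _ _ hx)

lemma derivIdeal_map (I : Ideal (MvPolynomial (Fin n) k)) :
    derivIdeal (Ideal.map φ I) = Ideal.map φ (derivIdeal I) := by
  apply le_antisymm
  · refine sup_le (Ideal.map_mono (le_derivIdeal I)) ?_
    rw [Ideal.span_le]
    rintro g ⟨f, hf, j, rfl⟩
    exact pderiv_mem_map_derivIdeal I hf j
  · rw [derivIdeal, Ideal.map_sup]
    refine sup_le le_sup_left ?_
    rw [Ideal.map_span]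
    refine le_trans (Ideal.span_mono ?_) le_sup_right
    rintro x ⟨g, ⟨f, hf, i, rfl⟩, rfl⟩
    exact ⟨φ f, Ideal.mem_map_of_mem _ hf, Sum.inl i,
      (pderiv_rename Sum.inl_injective i f).symm⟩

lemma derivIdeal_iterate_map (I : Ideal (MvPolynomial (Fin n) k)) (t : ℕ) :
    derivIdeal^[t] (Ideal.map φ I) = Ideal.map φ (derivIdeal^[t] I) := by
  induction t with
  | zero => rfl
  | succ t ih =>
    rw [Function.iterate_succ_apply', Function.iterate_succ_apply', ih, derivIdeal_map]

lemma ideal_map_prod {R S F : Type*} [CommRing R] [CommRing S] [FunLike F R S]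
    [RingHomClass F R S] (f : F)
    {ι : Type*} (s : Finset ι) (J : ι → Ideal R) :
    Ideal.map f (∏ i ∈ s, J i) = ∏ i ∈ s, Ideal.map f (J i) := by
  classical
  induction s using Finset.induction with
  | empty => simp [Ideal.map_top]
  | insert _ _ hx ih =>
    rw [Finset.prod_insert hx, Finset.prod_insert hx, Ideal.map_mul, ih]

end

/-- Functoriality of coefficient ideals under the smooth extension
`R = k[x₁,…,xₙ] ↪ S = k[x₁,…,xₙ,y₁,…,y_m]`: `C(I·S, a) = C(I,a)·S`. -/
theorem coeffIdeal_map_rename {k : Type*} [Field k] [CharZero k] {n m : ℕ}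
    (I : Ideal (MvPolynomial (Fin n) k)) (a : ℕ) (ha : 1 ≤ a) :
    coeffIdeal (Ideal.map (rename (Sum.inl : Fin n → Fin n ⊕ Fin m) :
        MvPolynomial (Fin n) k →ₐ[k] MvPolynomial (Fin n ⊕ Fin m) k) I) a =
      Ideal.map (rename (Sum.inl : Fin n → Fin n ⊕ Fin m) :
        MvPolynomial (Fin n) k →ₐ[k] MvPolynomial (Fin n ⊕ Fin m) k) (coeffIdeal I a) := by
  rw [coeffIdeal, coeffIdeal, Ideal.map_iSup]
  refine iSup_congr fun b => ?_
  rw [ideal_map_prod]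
  refine Finset.prod_congr rfl fun i _ => ?_
  rw [derivIdeal_iterate_map, Ideal.map_pow]
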